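/- Let D be a commutative ring. If f(t) = t + f_r t^r + ... and h(t) = t + h_k t^k + ... are formal power series (f_r, h_k the lowest nonzero coefficients beyond degree 1), f∘f = t, h∘h∘h = t, and (h∘f)∘(h∘f)∘(h∘f) = t, then f = t (i.e., f is the identity). -/

import Mathlib

open PowerSeries

/-- Composition of formal power series: `scomp D a f = f(a(t))`, intended for
`a` with zero constant term: `[t^n] f(a) = ∑_{k ≤ n} f_k [t^n](a^k)`. -/
noncomputable def PowerSeries.scomp (D : Type*) [CommRing D] (a f : PowerSeries D) :
    PowerSeries D :=
  PowerSeries.mk fun n => ∑ k ∈ Finset.range (n + 1), (coeff k f) * coeff n (a ^ k)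

section Aux

variable {D : Type*} [CommRing D]

lemma coeff_scomp (a f : PowerSeries D) (n : ℕ) :
    coeff n (PowerSeries.scomp D a f)
      = ∑ k ∈ Finset.range (n + 1), (coeff k f) * coeff n (a ^ k) := by
  simp [PowerSeries.scomp]

lemma coeff_pow_lt {x : PowerSeries D} (hx : constantCoeff x = 0) {n k : ℕ} (h : n < k) :
    coeff n (x ^ k) = 0 := by
  obtain ⟨b, rfl⟩ := PowerSeries.X_dvd_iff.mpr hx
  rw [mul_pow, PowerSeries.coeff_X_pow_mul', if_neg (by omega)]

lemma coeff_pow_self {x : PowerSeries D} (hx : constantCoeff x = 0) (n : ℕ) :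
    coeff n (x ^ n) = (coeff 1 x) ^ n := by
  obtain ⟨b, rfl⟩ := PowerSeries.X_dvd_iff.mpr hx
  rw [mul_pow, PowerSeries.coeff_X_pow_mul', if_pos le_rfl, Nat.sub_self,
    show (1:ℕ) = 0 + 1 from rfl, PowerSeries.coeff_succ_X_mul,
    PowerSeries.coeff_zero_eq_constantCoeff_apply, PowerSeries.coeff_zero_eq_constantCoeff_apply,
    map_pow]

lemma const_scomp (a f : PowerSeries D) :
    constantCoeff (PowerSeries.scomp D a f) = constantCoeff f := by
  rw [← PowerSeries.coeff_zero_eq_constantCoeff_apply, coeff_scomp]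
  simp

lemma coeff_one_scomp (a f : PowerSeries D) :
    coeff 1 (PowerSeries.scomp D a f) = coeff 1 f * coeff 1 a := by
  rw [coeff_scomp]
  simp [Finset.sum_range_succ, PowerSeries.coeff_one]

lemma scomp_X {x : PowerSeries D} (hx : constantCoeff x = 0) :
    PowerSeries.scomp D x PowerSeries.X = x := by
  ext n
  rw [coeff_scomp]
  rcases n with _ | n
  · simpa using hx.symm
  · rw [Finset.sum_eq_single 1]
    · simp
    · intro k _ hk
      simp [PowerSeries.coeff_X, hk]
    · intro hm; exact absurd (Finset.mem_range.mpr (by omega)) hm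

lemma X_scomp (f : PowerSeries D) : PowerSeries.scomp D PowerSeries.X f = f := by
  ext n
  rw [coeff_scomp, Finset.sum_eq_single n]
  · simp
  · intro k hk hkn
    rw [PowerSeries.coeff_X_pow, if_neg (Ne.symm hkn), mul_zero]
  · intro hm; exact absurd (Finset.mem_range.mpr (by omega)) hm

lemma coeff_eval₂ {x : PowerSeries D} (hx : constantCoeff x = 0) (p : Polynomial D) (n : ℕ) :
    coeff n (Polynomial.eval₂ (PowerSeries.C) x p)
      = ∑ i ∈ Finset.range (n + 1), p.coeff i * coeff n (x ^ i) := by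
  set N := max (p.natDegree + 1) (n + 1) with hN
  rw [Polynomial.eval₂_eq_sum, Polynomial.sum_over_range' _ (by simp) N (by omega), map_sum]
  rw [Finset.sum_congr rfl (fun i _ => by rw [PowerSeries.coeff_C_mul])]
  symm
  apply Finset.sum_subset (Finset.range_subset_range.mpr (by omega))
  intro i hi hni
  rw [coeff_pow_lt hx (by simp at hi hni ⊢; omega), mul_zero]

lemma coeff_scomp_eq_trunc {x : PowerSeries D} (hx : constantCoeff x = 0)
    (f : PowerSeries D) {n k : ℕ} (hnk : n ≤ k) :
    coeff n (PowerSeries.scomp D x f)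
      = coeff n (Polynomial.eval₂ (PowerSeries.C) x (PowerSeries.trunc (k + 1) f)) := by
  rw [coeff_eval₂ hx, coeff_scomp]
  apply Finset.sum_congr rfl
  intro i hi
  rw [PowerSeries.coeff_trunc, if_pos (by simp at hi ⊢; omega)]

lemma scomp_mul {x : PowerSeries D} (hx : constantCoeff x = 0) (f g : PowerSeries D) :
    PowerSeries.scomp D x (f * g)
      = PowerSeries.scomp D x f * PowerSeries.scomp D x g := by
  ext n
  rw [coeff_scomp_eq_trunc hx (f * g) (show n ≤ 2 * n by omega)]
  have key : ∀ i ≤ 2 * n, (PowerSeries.trunc (2 * n + 1) (f * g)).coeff i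
      = (PowerSeries.trunc (2 * n + 1) f * PowerSeries.trunc (2 * n + 1) g).coeff i := by
    intro i hi
    rw [PowerSeries.coeff_trunc, if_pos (by omega), Polynomial.coeff_mul,
      PowerSeries.coeff_mul]
    apply Finset.sum_congr rfl
    intro p hp
    rw [Finset.HasAntidiagonal.mem_antidiagonal] at hp
    rw [PowerSeries.coeff_trunc, PowerSeries.coeff_trunc, if_pos (by omega), if_pos (by omega)]
  rw [coeff_eval₂ hx, Finset.sum_congr rfl
      (fun i hi => by rw [key i (by simp at hi ⊢; omega)]),
    ← coeff_eval₂ hx, Polynomial.eval₂_mul, PowerSeries.coeff_mul, PowerSeries.coeff_mul]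
  apply Finset.sum_congr rfl
  intro p hp
  rw [Finset.HasAntidiagonal.mem_antidiagonal] at hp
  rw [← coeff_scomp_eq_trunc hx f (show p.1 ≤ 2 * n by omega),
    ← coeff_scomp_eq_trunc hx g (show p.2 ≤ 2 * n by omega)]

lemma scomp_one (x : PowerSeries D) : PowerSeries.scomp D x 1 = 1 := by
  ext n
  rw [coeff_scomp, Finset.sum_eq_single 0]
  · simp
  · intro k _ hk
    rw [PowerSeries.coeff_one, if_neg hk, zero_mul]
  · simp

lemma scomp_pow {x : PowerSeries D} (hx : constantCoeff x = 0) (f : PowerSeries D) (k : ℕ) :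
    PowerSeries.scomp D x (f ^ k) = (PowerSeries.scomp D x f) ^ k := by
  induction k with
  | zero => simpa using scomp_one x
  | succ k ih => rw [pow_succ, scomp_mul hx, ih, pow_succ]

lemma scomp_assoc {x y : PowerSeries D} (hx : constantCoeff x = 0)
    (hy : constantCoeff y = 0) (z : PowerSeries D) :
    PowerSeries.scomp D (PowerSeries.scomp D x y) z
      = PowerSeries.scomp D x (PowerSeries.scomp D y z) := by
  ext n
  rw [coeff_scomp, coeff_scomp]
  have step1 : ∀ k ∈ Finset.range (n + 1),
      coeff k z * coeff n ((PowerSeries.scomp D x y) ^ k)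
        = ∑ m ∈ Finset.range (n + 1), coeff k z * (coeff m (y ^ k) * coeff n (x ^ m)) := by
    intro k _
    rw [← scomp_pow hx y k, coeff_scomp, Finset.mul_sum]
  rw [Finset.sum_congr rfl step1, Finset.sum_comm]
  apply Finset.sum_congr rfl
  intro m hm
  rw [coeff_scomp, Finset.sum_mul]
  symm
  calc ∑ k ∈ Finset.range (m + 1), coeff k z * coeff m (y ^ k) * coeff n (x ^ m)
      = ∑ k ∈ Finset.range (n + 1), coeff k z * coeff m (y ^ k) * coeff n (x ^ m) := by
        apply Finset.sum_subset (Finset.range_subset_range.mpr (by simp at hm ⊢; omega))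
        intro k hk hkm
        rw [coeff_pow_lt hy (by simp at hk hkm ⊢; omega), mul_zero, zero_mul]
    _ = ∑ k ∈ Finset.range (n + 1), coeff k z * (coeff m (y ^ k) * coeff n (x ^ m)) := by
        simp [mul_assoc]

lemma coeff_scomp_congr_outer {x f g : PowerSeries D} (hx0 : constantCoeff x = 0)
    (hx1 : coeff 1 x = 1) {n : ℕ} (hfg : ∀ j < n, coeff j f = coeff j g) :
    coeff n (PowerSeries.scomp D x f)
      = coeff n (PowerSeries.scomp D x g) + (coeff n f - coeff n g) := by
  have hmain : ∑ k ∈ Finset.range n, coeff k f * coeff n (x ^ k)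
      = ∑ k ∈ Finset.range n, coeff k g * coeff n (x ^ k) :=
    Finset.sum_congr rfl (fun k hk => by rw [hfg k (Finset.mem_range.mp hk)])
  rw [coeff_scomp, coeff_scomp, Finset.sum_range_succ, Finset.sum_range_succ,
    coeff_pow_self hx0, hx1, one_pow, mul_one, mul_one, hmain]
  ring

lemma coeff_pow_sub {f g : PowerSeries D} (hf0 : constantCoeff f = 0)
    (hg0 : constantCoeff g = 0) {n : ℕ} (hfg : ∀ j < n, coeff j f = coeff j g) (k : ℕ) :
    coeff n (f ^ k) - coeff n (g ^ k)
      = if k = 1 then coeff n f - coeff n g else 0 := by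
  match k with
  | 0 => simp
  | 1 => simp
  | (k + 2) =>
    rw [if_neg (by omega)]
    obtain ⟨u, hu⟩ : (PowerSeries.X : PowerSeries D) ^ n ∣ f - g :=
      PowerSeries.X_pow_dvd_iff.mpr (fun m hm => by rw [map_sub, hfg m hm, sub_self])
    have hgeo := geom_sum₂_mul f g (k + 2)
    rw [← map_sub, ← hgeo, hu, show
        (∑ i ∈ Finset.range (k + 2), f ^ i * g ^ (k + 2 - 1 - i)) * (PowerSeries.X ^ n * u)
        = PowerSeries.X ^ n * ((∑ i ∈ Finset.range (k + 2), f ^ i * g ^ (k + 2 - 1 - i)) * u)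
        by ring,
      PowerSeries.coeff_X_pow_mul', if_pos le_rfl, Nat.sub_self,
      PowerSeries.coeff_zero_eq_constantCoeff_apply, map_mul, map_sum]
    have hz : ∀ i ∈ Finset.range (k + 2),
        constantCoeff (f ^ i * g ^ (k + 2 - 1 - i)) = 0 := by
      intro i hi
      rw [map_mul, map_pow, map_pow, hf0, hg0]
      rcases Nat.eq_zero_or_pos i with h | h
      · subst h
        rw [zero_pow (show k + 2 - 1 - 0 ≠ 0 by omega), mul_zero]
      · rw [zero_pow (show i ≠ 0 by omega), zero_mul]
    rw [Finset.sum_eq_zero hz, zero_mul]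

lemma coeff_scomp_congr_inner {y f g : PowerSeries D} (hf0 : constantCoeff f = 0)
    (hg0 : constantCoeff g = 0) {n : ℕ} (hfg : ∀ j < n, coeff j f = coeff j g) :
    coeff n (PowerSeries.scomp D f y)
      = coeff n (PowerSeries.scomp D g y)
        + coeff 1 y * (coeff n f - coeff n g) := by
  have hmain : ∑ k ∈ Finset.range (n + 1),
        (coeff k y * coeff n (f ^ k) - coeff k y * coeff n (g ^ k))
      = ∑ k ∈ Finset.range (n + 1),
        if k = 1 then coeff k y * (coeff n f - coeff n g) else 0 :=
    Finset.sum_congr rfl (fun k _ => by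
      rw [← mul_sub, coeff_pow_sub hf0 hg0 hfg k, mul_ite, mul_zero])
  rw [coeff_scomp, coeff_scomp, ← sub_eq_iff_eq_add', ← Finset.sum_sub_distrib, hmain,
    Finset.sum_ite_eq' (Finset.range (n + 1)) 1
      (fun k => coeff k y * (coeff n f - coeff n g))]
  rcases Nat.eq_zero_or_pos n with h | h
  · subst h
    rw [if_neg (by simp)]
    have hc : coeff 0 f - coeff 0 g = 0 := by
      rw [PowerSeries.coeff_zero_eq_constantCoeff_apply, hf0,
        PowerSeries.coeff_zero_eq_constantCoeff_apply, hg0, sub_self]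
    rw [hc, mul_zero]
  · rw [if_pos (Finset.mem_range.mpr (by omega))]

end Aux

/-- In the substitution group of formal power series `t + a₂t² + ⋯` over a commutative
ring, the relations `f∘f = t`, `h∘h∘h = t` and `(h∘f)∘(h∘f)∘(h∘f) = t` force `f = t`. -/
theorem eq_X_of_involution_of_relations
    (D : Type*) [CommRing D] (f h : PowerSeries D)
    (hf0 : constantCoeff f = 0) (hf1 : coeff 1 f = 1)
    (hh0 : constantCoeff h = 0) (hh1 : coeff 1 h = 1)
    (hf : PowerSeries.scomp D f f = PowerSeries.X)
    (hh : PowerSeries.scomp D (PowerSeries.scomp D h h) h = PowerSeries.X)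
    (hhf : PowerSeries.scomp D
        (PowerSeries.scomp D (PowerSeries.scomp D f h) (PowerSeries.scomp D f h))
        (PowerSeries.scomp D f h) = PowerSeries.X) :
    f = PowerSeries.X := by
  -- constant-coefficient bookkeeping
  have hc0 : ∀ x y : PowerSeries D, constantCoeff y = 0 →
      constantCoeff (PowerSeries.scomp D x y) = 0 := fun x y hy => (const_scomp x y).trans hy
  -- the word `P = f * c1 * c2` equals `(fh)(fh)(fh) = X`, by associativity and `h³ = X`.
  have hw2 : constantCoeff (PowerSeries.scomp D h h) = 0 := hc0 _ _ hh0
  have hg0 : constantCoeff (PowerSeries.scomp D f h) = 0 := hc0 _ _ hh0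
  have j2 : PowerSeries.scomp D (PowerSeries.scomp D h h) (PowerSeries.scomp D h h) = h := by
    rw [← scomp_assoc hw2 hh0 h, hh]
    exact X_scomp h
  have hkey : ∀ z : PowerSeries D,
      PowerSeries.scomp D (PowerSeries.scomp D h h)
        (PowerSeries.scomp D (PowerSeries.scomp D h h) z) = PowerSeries.scomp D h z := by
    intro z
    rw [← scomp_assoc hw2 hw2 z, j2]
  have hc1flat : PowerSeries.scomp D (PowerSeries.scomp D (PowerSeries.scomp D h f) h) h
      = PowerSeries.scomp D h (PowerSeries.scomp D f (PowerSeries.scomp D h h)) :=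
    (scomp_assoc (hc0 h f hf0) hh0 h).trans (scomp_assoc hh0 hf0 (PowerSeries.scomp D h h))
  have hc2flat : PowerSeries.scomp D (PowerSeries.scomp D (PowerSeries.scomp D h h) f) h
      = PowerSeries.scomp D (PowerSeries.scomp D h h) (PowerSeries.scomp D f h) :=
    scomp_assoc hw2 hf0 h
  have hgflat : ∀ z, PowerSeries.scomp D (PowerSeries.scomp D f h) z
      = PowerSeries.scomp D f (PowerSeries.scomp D h z) := fun z => scomp_assoc hf0 hh0 z
  have hP : PowerSeries.scomp D
      (PowerSeries.scomp D f
        (PowerSeries.scomp D (PowerSeries.scomp D (PowerSeries.scomp D h f) h) h))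
      (PowerSeries.scomp D (PowerSeries.scomp D (PowerSeries.scomp D h h) f) h)
      = PowerSeries.X := by
    rw [scomp_assoc hf0 (hc0 _ _ hh0), hc1flat,
      scomp_assoc hh0 (hc0 _ _ hw2), scomp_assoc hf0 hw2, hc2flat,
      hkey (PowerSeries.scomp D f h), ← hgflat, ← hgflat,
      ← scomp_assoc hg0 hg0 (PowerSeries.scomp D f h)]
    exact hhf
  -- now the coefficientwise strong induction
  ext n
  induction n using Nat.strong_induction_on with
  | _ n IH =>
  match n with
  | 0 => simpa [PowerSeries.coeff_zero_eq_constantCoeff_apply] using hf0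
  | 1 => simpa using hf1
  | (r + 2) =>
    set r' := r + 2 with hr'
    have hXr : coeff r' (PowerSeries.X : PowerSeries D) = 0 := by
      rw [PowerSeries.coeff_X, if_neg (by omega)]
    rw [hXr]
    have hlow : ∀ j < r', coeff j f = coeff j PowerSeries.X := fun j hj => IH j hj
    have hXlow : ∀ j, j < r' → 2 ≤ j → coeff j PowerSeries.X = 0 := fun j _ h2 => by
      rw [PowerSeries.coeff_X, if_neg (by omega)]
    set a := coeff r' f with ha
    -- Step 1 : 2a = 0, from f∘f = X
    have h2a : a + a = 0 := by
      have e1 := coeff_scomp_congr_outer hf0 hf1 (n := r') hlow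
      rw [scomp_X hf0, hf, hXr, sub_zero, ← ha] at e1
      exact e1.symm
    -- Step 2 : conjugates c1 and c2, congruent to X below r', with r'-coefficient a
    -- s1 := PowerSeries.scomp D h f
    have hq1 : ∀ j ≤ r', coeff j (PowerSeries.scomp D h f)
        = coeff j h + (coeff j f - coeff j PowerSeries.X) := by
      intro j hj
      exact (coeff_scomp_congr_outer hh0 hh1
        (fun i hi => hlow i (by omega))).trans (by rw [scomp_X hh0])
    have hq1low : ∀ j < r', coeff j (PowerSeries.scomp D h f) = coeff j h := fun j hj => by
      rw [hq1 j (by omega), hlow j hj, sub_self, add_zero]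
    have hq1r : coeff r' (PowerSeries.scomp D h f) = coeff r' h + a := by
      rw [hq1 r' le_rfl, hXr, sub_zero, ha]
    -- s2 := PowerSeries.scomp D (PowerSeries.scomp D h f) h  vs  w2 := PowerSeries.scomp D h h
    have hs10 : constantCoeff (PowerSeries.scomp D h f) = 0 := hc0 _ _ hf0
    have hq2 : ∀ j ≤ r', coeff j (PowerSeries.scomp D (PowerSeries.scomp D h f) h)
        = coeff j (PowerSeries.scomp D h h) + coeff 1 h * (coeff j (PowerSeries.scomp D h f) - coeff j h) := by
      intro j hj
      exact coeff_scomp_congr_inner hs10 hh0 (fun i hi => hq1low i (by omega))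
    have hq2low : ∀ j < r', coeff j (PowerSeries.scomp D (PowerSeries.scomp D h f) h) = coeff j (PowerSeries.scomp D h h) := fun j hj => by
      rw [hq2 j (by omega), hq1low j hj, sub_self, mul_zero, add_zero]
    have hq2r : coeff r' (PowerSeries.scomp D (PowerSeries.scomp D h f) h) = coeff r' (PowerSeries.scomp D h h) + a := by
      rw [hq2 r' le_rfl, hq1r, hh1, one_mul]
      ring
    -- c1 := PowerSeries.scomp D (PowerSeries.scomp D (PowerSeries.scomp D h f) h) h  vs  X = PowerSeries.scomp D (PowerSeries.scomp D h h) h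
    have hs20 : constantCoeff (PowerSeries.scomp D (PowerSeries.scomp D h f) h) = 0 := hc0 _ _ hh0
    have hq3 : ∀ j ≤ r', coeff j (PowerSeries.scomp D (PowerSeries.scomp D (PowerSeries.scomp D h f) h) h)
        = coeff j (PowerSeries.scomp D (PowerSeries.scomp D h h) h)
          + coeff 1 h * (coeff j (PowerSeries.scomp D (PowerSeries.scomp D h f) h) - coeff j (PowerSeries.scomp D h h)) := by
      intro j hj
      exact coeff_scomp_congr_inner hs20 hw2 (fun i hi => hq2low i (by omega))
    have hc1low : ∀ j < r', coeff j (PowerSeries.scomp D (PowerSeries.scomp D (PowerSeries.scomp D h f) h) h) = coeff j PowerSeries.X :=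
      fun j hj => by
        rw [hq3 j (by omega), hq2low j hj, sub_self, mul_zero, add_zero, hh]
    have hc1r : coeff r' (PowerSeries.scomp D (PowerSeries.scomp D (PowerSeries.scomp D h f) h) h) = a := by
      rw [hq3 r' le_rfl, hq2r, hh, hXr, hh1, one_mul]
      ring
    -- t1 := PowerSeries.scomp D (PowerSeries.scomp D h h) f  vs  w2 = PowerSeries.scomp D h h
    have hw21 : coeff 1 (PowerSeries.scomp D h h) = 1 := by rw [coeff_one_scomp, hh1, one_mul]
    have hp1 : ∀ j ≤ r', coeff j (PowerSeries.scomp D (PowerSeries.scomp D h h) f)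
        = coeff j (PowerSeries.scomp D h h) + (coeff j f - coeff j PowerSeries.X) := by
      intro j hj
      exact (coeff_scomp_congr_outer hw2 hw21
        (fun i hi => hlow i (by omega))).trans (by rw [scomp_X hw2])
    have hp1low : ∀ j < r', coeff j (PowerSeries.scomp D (PowerSeries.scomp D h h) f) = coeff j (PowerSeries.scomp D h h) := fun j hj => by
      rw [hp1 j (by omega), hlow j hj, sub_self, add_zero]
    have hp1r : coeff r' (PowerSeries.scomp D (PowerSeries.scomp D h h) f) = coeff r' (PowerSeries.scomp D h h) + a := by
      rw [hp1 r' le_rfl, hXr, sub_zero, ha]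
    -- c2 := PowerSeries.scomp D (PowerSeries.scomp D (PowerSeries.scomp D h h) f) h  vs  X = PowerSeries.scomp D (PowerSeries.scomp D h h) h
    have ht10 : constantCoeff (PowerSeries.scomp D (PowerSeries.scomp D h h) f) = 0 := hc0 _ _ hf0
    have hp2 : ∀ j ≤ r', coeff j (PowerSeries.scomp D (PowerSeries.scomp D (PowerSeries.scomp D h h) f) h)
        = coeff j (PowerSeries.scomp D (PowerSeries.scomp D h h) h)
          + coeff 1 h * (coeff j (PowerSeries.scomp D (PowerSeries.scomp D h h) f) - coeff j (PowerSeries.scomp D h h)) := by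
      intro j hj
      exact coeff_scomp_congr_inner ht10 hw2 (fun i hi => hp1low i (by omega))
    have hc2low : ∀ j < r', coeff j (PowerSeries.scomp D (PowerSeries.scomp D (PowerSeries.scomp D h h) f) h) = coeff j PowerSeries.X :=
      fun j hj => by
        rw [hp2 j (by omega), hp1low j hj, sub_self, mul_zero, add_zero, hh]
    have hc2r : coeff r' (PowerSeries.scomp D (PowerSeries.scomp D (PowerSeries.scomp D h h) f) h) = a := by
      rw [hp2 r' le_rfl, hp1r, hh, hXr, hh1, one_mul]
      ring
    -- step 3 : compute coeff r' of P = PowerSeries.scomp D (PowerSeries.scomp D f c1) c2 in two ways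
    set c1 := PowerSeries.scomp D (PowerSeries.scomp D (PowerSeries.scomp D h f) h) h with hc1def
    set c2 := PowerSeries.scomp D (PowerSeries.scomp D (PowerSeries.scomp D h h) f) h with hc2def
    have hc10 : constantCoeff c1 = 0 := hc0 _ _ hh0
    have hc11 : coeff 1 c1 = 1 := by
      rw [hc1low 1 (by omega)]; simp
    -- u1 := PowerSeries.scomp D f c1
    have hu1 : ∀ j ≤ r', coeff j (PowerSeries.scomp D f c1)
        = coeff j f + (coeff j c1 - coeff j PowerSeries.X) := by
      intro j hj
      exact (coeff_scomp_congr_outer hf0 hf1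
        (fun i hi => hc1low i (by omega))).trans (by rw [scomp_X hf0])
    have hu1low : ∀ j < r', coeff j (PowerSeries.scomp D f c1) = coeff j f := fun j hj => by
      rw [hu1 j (by omega), hc1low j hj, sub_self, add_zero]
    have hu1r : coeff r' (PowerSeries.scomp D f c1) = a + a := by
      rw [hu1 r' le_rfl, hc1r, hXr, sub_zero, ha]
    have hu10 : constantCoeff (PowerSeries.scomp D f c1) = 0 := hc0 _ _ hc10
    have hu11 : coeff 1 (PowerSeries.scomp D f c1) = 1 := by
      rw [hu1low 1 (by omega), hf1]
    -- P := PowerSeries.scomp D (PowerSeries.scomp D f c1) c2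
    have hPr : coeff r' (PowerSeries.scomp D (PowerSeries.scomp D f c1) c2) = (a + a) + a := by
      have e := coeff_scomp_congr_outer hu10 hu11
        (f := c2) (g := PowerSeries.X) (n := r') (fun i hi => hc2low i hi)
      rw [scomp_X hu10, hu1r, hc2r, hXr, sub_zero] at e
      exact e
    have hPX : coeff r' (PowerSeries.scomp D (PowerSeries.scomp D f c1) c2) = 0 := by
      rw [hc1def, hc2def, hP, hXr]
    -- conclude : 3a = 0 and 2a = 0, hence a = 0
    have h3a : (a + a) + a = 0 := by rw [← hPr, hPX]
    have : a = 0 := by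
      have := h3a
      rw [h2a, zero_add] at this
      exact this
    exact this
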